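/- For every integer n ≥ 2, the independence complex I(M^H_{1,n+1}) has the same simple homotopy type as the suspension Σ I(C^H_{1,n}). -/

import Mathlib

/-! ## Abstract simplicial complexes, collapses, simple homotopy type -/

/-- `K` is obtained from `L` by removing a free pair `(σ, τ)`:
`σ ⊊ τ`, `|τ| = |σ| + 1`, and `τ` is the unique face of `K` strictly containing `σ`. -/
def IsElemCollapse {V : Type} [DecidableEq V] (K L : Finset (Finset V)) : Prop :=
  ∃ σ τ : Finset V, σ ∈ K ∧ τ ∈ K ∧ σ ⊂ τ ∧ τ.card = σ.card + 1 ∧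
    (∀ ρ ∈ K, σ ⊂ ρ → ρ = τ) ∧ L = K \ {σ, τ}

/-- `K` collapses onto `L` by a finite sequence of elementary collapses. -/
def Collapses {V : Type} [DecidableEq V] (K L : Finset (Finset V)) : Prop :=
  Relation.ReflTransGen (fun A B => IsElemCollapse A B) K L

/-- A finite abstract simplicial complex (with its ambient vertex type). -/
structure AbsCplx : Type 1 where
  V : Type
  [deceq : DecidableEq V]
  faces : Finset (Finset V)
  empty_mem : ∅ ∈ faces
  down_closed : ∀ σ ∈ faces, ∀ τ ⊆ σ, τ ∈ faces

attribute [instance] AbsCplx.deceq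

/-- Isomorphism of abstract simplicial complexes: an injection of the vertices
(the vertices being the elements occurring in faces) carrying faces exactly to faces. -/
def AbsCplx.Iso (K L : AbsCplx) : Prop :=
  ∃ f : K.V → L.V, Set.InjOn f {v | ({v} : Finset K.V) ∈ K.faces} ∧
    L.faces = K.faces.image (Finset.image f)

/-- One step: an isomorphism or an elementary collapse. -/
def AbsCplx.Step (K L : AbsCplx) : Prop :=
  K.Iso L ∨ ∃ h : K.V = L.V, IsElemCollapse (h ▸ K.faces) L.faces

/-- Same simple homotopy type: finite zigzag of elementary collapses,
elementary expansions, and isomorphisms. -/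
def SimpleHtpyEq (K L : AbsCplx) : Prop := Relation.EqvGen AbsCplx.Step K L

/-! ## Join, suspension, spheres, wedges, point -/

/-- Join of two complexes, on the disjoint union of the vertex types. -/
def AbsCplx.join (K L : AbsCplx) : AbsCplx where
  V := K.V ⊕ L.V
  faces := (K.faces ×ˢ L.faces).image fun p => p.1.disjSum p.2
  empty_mem := by
    refine Finset.mem_image.2 ⟨(∅, ∅), Finset.mem_product.2 ⟨K.empty_mem, L.empty_mem⟩, ?_⟩
    ext x
    cases x <;> simp [Finset.inl_mem_disjSum, Finset.inr_mem_disjSum]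
  down_closed := by
    intro σ hσ τ hτ
    rcases Finset.mem_image.1 hσ with ⟨p, hp, rfl⟩
    rcases Finset.mem_product.1 hp with ⟨hp1, hp2⟩
    refine Finset.mem_image.2
      ⟨(p.1.filter (fun v => Sum.inl v ∈ τ), p.2.filter (fun w => Sum.inr w ∈ τ)), ?_, ?_⟩
    · exact Finset.mem_product.2
        ⟨K.down_closed _ hp1 _ (Finset.filter_subset _ _),
         L.down_closed _ hp2 _ (Finset.filter_subset _ _)⟩
    · ext x
      cases x with
      | inl v =>
        simp only [Finset.inl_mem_disjSum, Finset.mem_filter]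
        exact ⟨fun h => h.2, fun h => ⟨Finset.inl_mem_disjSum.1 (hτ h), h⟩⟩
      | inr w =>
        simp only [Finset.inr_mem_disjSum, Finset.mem_filter]
        exact ⟨fun h => h.2, fun h => ⟨Finset.inr_mem_disjSum.1 (hτ h), h⟩⟩

/-- `∂Δ¹`: two vertices, no edge. -/
def sphere0 : AbsCplx where
  V := Bool
  faces := {∅, {false}, {true}}
  empty_mem := by decide
  down_closed := by decide

/-- The one point complex. -/
def ptCplx : AbsCplx where
  V := Unit
  faces := {∅, {()}}
  empty_mem := by decide
  down_closed := by decide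

/-- Suspension `ΣK = K * ∂Δ¹`. -/
def AbsCplx.susp (K : AbsCplx) : AbsCplx := K.join sphere0

/-- Iterated suspension `Σ^m K`. -/
def AbsCplx.nsusp (K : AbsCplx) (m : ℕ) : AbsCplx := AbsCplx.susp^[m] K

/-- `◊ⁿ`, the join of `n+1` copies of `∂Δ¹` (a triangulated `n`-sphere). -/
def diamond : ℕ → AbsCplx
  | 0 => sphere0
  | n + 1 => (diamond n).join sphere0

/-- A chosen base vertex of `◊ⁿ`. -/
def diamondPt : (n : ℕ) → (diamond n).V
  | 0 => true
  | _ + 1 => Sum.inr true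

/-- Wedge of `m` copies of `K`, identifying the chosen vertex `v₀` of each copy
to a single common vertex. -/
def wedge (m : ℕ) (K : AbsCplx) (v₀ : K.V) : AbsCplx where
  V := Option (Fin m × K.V)
  faces := insert ∅ ((Finset.univ (α := Fin m) ×ˢ K.faces).image fun p =>
    p.2.image fun v => if v = v₀ then none else some (p.1, v))
  empty_mem := Finset.mem_insert_self _ _
  down_closed := by
    intro σ hσ τ hτ
    rcases Finset.mem_insert.1 hσ with h | h
    · subst h
      rw [Finset.subset_empty.1 hτ]
      exact Finset.mem_insert_self _ _
    · rcases Finset.mem_image.1 h with ⟨p, hp, rfl⟩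
      rcases Finset.mem_product.1 hp with ⟨-, hp2⟩
      rcases Finset.subset_image_iff.1 hτ with ⟨τ₀, hτ₀, rfl⟩
      exact Finset.mem_insert.2 (Or.inr (Finset.mem_image.2
        ⟨(p.1, τ₀), Finset.mem_product.2 ⟨Finset.mem_univ _, K.down_closed _ hp2 _ hτ₀⟩, rfl⟩))

/-! ## Graphs and independence complexes -/

/-- The closed neighborhood `N[v]`. -/
def closedNbhd {V : Type} (G : SimpleGraph V) (v : V) : Set V := insert v {w | G.Adj v w}

/-- The graph `G - e` obtained by removing the edge `vw`. -/
def deleteEdge {V : Type} [DecidableEq V] (G : SimpleGraph V) (v w : V) : SimpleGraph V where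
  Adj a b := G.Adj a b ∧ s(a, b) ≠ s(v, w)
  symm := by
    constructor
    intro a b h
    exact ⟨G.symm.symm _ _ h.1, by rw [Sym2.eq_swap]; exact h.2⟩
  loopless := ⟨fun a h => G.loopless.irrefl a h.1⟩

instance {V : Type} [DecidableEq V] (G : SimpleGraph V) [DecidableRel G.Adj] (v w : V) :
    DecidableRel (deleteEdge G v w).Adj := fun a b =>
  inferInstanceAs (Decidable (G.Adj a b ∧ s(a, b) ≠ s(v, w)))

/-- Independent finsets of `G` contained in the vertex set `s`
(the faces of the independence complex of the induced subgraph of `G` on `s`). -/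
def indepFacesOn {V : Type} [Fintype V] [DecidableEq V] (G : SimpleGraph V)
    [DecidableRel G.Adj] (s : Finset V) : Finset (Finset V) :=
  s.powerset.filter fun t => ∀ a ∈ t, ∀ b ∈ t, ¬ G.Adj a b

/-- The faces of the independence complex `I(G)`. -/
def indepFaces {V : Type} [Fintype V] [DecidableEq V] (G : SimpleGraph V)
    [DecidableRel G.Adj] : Finset (Finset V) :=
  indepFacesOn G Finset.univ

/-- The independence complex `I(G)` as an abstract simplicial complex. -/
def indepCplx {V : Type} [Fintype V] [DecidableEq V] (G : SimpleGraph V)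
    [DecidableRel G.Adj] : AbsCplx where
  V := V
  faces := indepFaces G
  empty_mem := by simp [indepFaces, indepFacesOn]
  down_closed := by
    intro σ hσ τ hτ
    simp only [indepFaces, indepFacesOn, Finset.mem_filter, Finset.mem_powerset] at hσ ⊢
    exact ⟨hτ.trans hσ.1, fun a ha b hb => hσ.2 a (hτ ha) b (hτ hb)⟩

/-- Reduced Euler characteristic of a finite complex given by its set of faces. -/
def redEuler {V : Type} [DecidableEq V] (K : Finset (Finset V)) : ℤ :=
  ∑ σ ∈ K.filter (fun σ => σ ≠ ∅), (-1 : ℤ) ^ (σ.card - 1)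

/-! ## Grid graphs (0-indexed models of the 1-indexed graphs of the paper) -/

/-- The planar grid graph `P_{m,n}`. -/
def gridP (m n : ℕ) : SimpleGraph (Fin m × Fin n) :=
  SimpleGraph.fromRel fun u v =>
    |(u.1 : ℤ) - (v.1 : ℤ)| + |(u.2 : ℤ) - (v.2 : ℤ)| = 1

instance (m n : ℕ) : DecidableRel (gridP m n).Adj := fun a b =>
  decidable_of_iff _ (SimpleGraph.fromRel_adj _ a b).symm

/-- The cylindrical grid graph `C_{m,n}`: columns indexed cyclically. -/
def gridC (m n : ℕ) : SimpleGraph (Fin m × Fin n) :=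
  SimpleGraph.fromRel fun u v =>
    (u.1 = v.1 ∧ (v.2 : ℕ) = ((u.2 : ℕ) + 1) % n) ∨
    ((u.1 : ℕ) + 1 = (v.1 : ℕ) ∧ u.2 = v.2)

instance (m n : ℕ) : DecidableRel (gridC m n).Adj := fun a b =>
  decidable_of_iff _ (SimpleGraph.fromRel_adj _ a b).symm

/-- The Möbius grid graph `M_{m,n}`. -/
def gridM (m n : ℕ) : SimpleGraph (Fin m × Fin n) :=
  SimpleGraph.fromRel fun u v =>
    ((u.1 : ℕ) + 1 = (v.1 : ℕ) ∧ u.2 = v.2) ∨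
    (u.1 = v.1 ∧ (u.2 : ℕ) + 1 = (v.2 : ℕ)) ∨
    ((u.2 : ℕ) = n - 1 ∧ (v.2 : ℕ) = 0 ∧ (u.1 : ℕ) + (v.1 : ℕ) = m - 1)

instance (m n : ℕ) : DecidableRel (gridM m n).Adj := fun a b =>
  decidable_of_iff _ (SimpleGraph.fromRel_adj _ a b).symm

/-- The cylindrical hexagonal grid graph `C^H_{1,n}`: obtained from `C_{2,2n}`
by deleting the vertical edges in the even columns. -/
def gridCH (n : ℕ) : SimpleGraph (Fin 2 × Fin (2 * n)) :=
  SimpleGraph.fromRel fun u v =>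
    (u.1 = v.1 ∧ (v.2 : ℕ) = ((u.2 : ℕ) + 1) % (2 * n)) ∨
    ((u.1 : ℕ) + 1 = (v.1 : ℕ) ∧ u.2 = v.2 ∧ ¬ Even (u.2 : ℕ))

instance (n : ℕ) : DecidableRel (gridCH n).Adj := fun a b =>
  decidable_of_iff _ (SimpleGraph.fromRel_adj _ a b).symm

/-- `M^H_{1,n}`: obtained from `M_{2,2n}` by deleting the vertical edges in the
odd columns (`1`-indexed), i.e. the even columns in this `0`-indexed model. -/
def gridMH (n : ℕ) : SimpleGraph (Fin 2 × Fin (2 * n)) :=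
  SimpleGraph.fromRel fun u v =>
    ((u.1 : ℕ) + 1 = (v.1 : ℕ) ∧ u.2 = v.2 ∧ ¬ Even (u.2 : ℕ)) ∨
    (u.1 = v.1 ∧ (u.2 : ℕ) + 1 = (v.2 : ℕ)) ∨
    ((u.2 : ℕ) = 2 * n - 1 ∧ (v.2 : ℕ) = 0 ∧ (u.1 : ℕ) + (v.1 : ℕ) = 1)

instance (n : ℕ) : DecidableRel (gridMH n).Adj := fun a b =>
  decidable_of_iff _ (SimpleGraph.fromRel_adj _ a b).symm



section Fold

variable {V : Type} [DecidableEq V]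

/-- Package a finset of faces as an abstract simplicial complex. -/
def packCplx (F : Finset (Finset V)) (h0 : ∅ ∈ F)
    (hdc : ∀ σ ∈ F, ∀ τ ⊆ σ, τ ∈ F) : AbsCplx :=
  { V := V, faces := F, empty_mem := h0, down_closed := hdc }

lemma packCplx_congr {F G : Finset (Finset V)} (h : F = G) (h0 hdc h0' hdc') :
    packCplx F h0 hdc = packCplx G h0' hdc' := by subst h; rfl

lemma SimpleHtpyEq.of_eq {K L : AbsCplx} (h : K = L) : SimpleHtpyEq K L := by
  subst h; exact Relation.EqvGen.refl _

/-- The fold lemma: if `u ∉ t` and every face `σ ⊇ t` with `u ∉ σ` satisfies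
`insert u σ ∈ F`, then the complex collapses onto the faces not containing `t`. -/
theorem fold_eqv (t : Finset V) (u : V) (hu : u ∉ t) (hne : t.Nonempty)
    (F : Finset (Finset V)) (h0 : ∅ ∈ F) (hdc : ∀ σ ∈ F, ∀ τ ⊆ σ, τ ∈ F)
    (hyp : ∀ σ ∈ F, t ⊆ σ → u ∉ σ → insert u σ ∈ F)
    (G : Finset (Finset V)) (hG : G = F.filter (fun σ => ¬ t ⊆ σ))
    (h0G : ∅ ∈ G) (hdcG : ∀ σ ∈ G, ∀ τ ⊆ σ, τ ∈ G) :
    SimpleHtpyEq (packCplx F h0 hdc) (packCplx G h0G hdcG) := by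
  by_cases hA : (F.filter (fun σ => t ⊆ σ ∧ u ∉ σ)).Nonempty
  · obtain ⟨σ₀, hσ₀A, hmax⟩ := Finset.exists_max_image _ Finset.card hA
    rcases Finset.mem_filter.1 hσ₀A with ⟨hσ₀F, htσ₀, huσ₀⟩
    have hτ₀F : insert u σ₀ ∈ F := hyp σ₀ hσ₀F htσ₀ huσ₀
    have hss : σ₀ ⊂ insert u σ₀ := Finset.ssubset_insert huσ₀
    have hcard : (insert u σ₀).card = σ₀.card + 1 := Finset.card_insert_of_notMem huσ₀
    have huniq : ∀ ρ ∈ F, σ₀ ⊂ ρ → ρ = insert u σ₀ := by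
      intro ρ hρF hρss
      by_cases huρ : u ∈ ρ
      · have h1 : ρ.erase u ∈ F := hdc ρ hρF _ (Finset.erase_subset _ _)
        have h2 : t ⊆ ρ.erase u := by
          intro x hx
          exact Finset.mem_erase.2 ⟨fun hxu => hu (hxu ▸ hx), htσ₀.trans hρss.subset hx⟩
        have h3 : ρ.erase u ∈ F.filter (fun σ => t ⊆ σ ∧ u ∉ σ) :=
          Finset.mem_filter.2 ⟨h1, h2, Finset.notMem_erase _ _⟩
        have h4 : σ₀ ⊆ ρ.erase u := fun x hx =>
          Finset.mem_erase.2 ⟨fun hxu => huσ₀ (hxu ▸ hx), hρss.subset hx⟩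
        have h5 : σ₀ = ρ.erase u :=
          Finset.eq_of_subset_of_card_le h4 (hmax _ h3)
        rw [h5, Finset.insert_erase huρ]
      · exfalso
        have h3 : ρ ∈ F.filter (fun σ => t ⊆ σ ∧ u ∉ σ) :=
          Finset.mem_filter.2 ⟨hρF, htσ₀.trans hρss.subset, huρ⟩
        have h4 := hmax _ h3
        have h5 := Finset.card_lt_card hρss
        omega
    have hne₀ : σ₀ ≠ ∅ := by
      rintro rfl
      rcases hne with ⟨x, hx⟩
      exact absurd (htσ₀ hx) (Finset.notMem_empty x)
    have h0' : ∅ ∈ F \ {σ₀, insert u σ₀} := by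
      rw [Finset.mem_sdiff]
      refine ⟨h0, ?_⟩
      simp only [Finset.mem_insert, Finset.mem_singleton]
      push_neg
      exact ⟨fun h => hne₀ h.symm, fun h => (Finset.insert_ne_empty _ _) h.symm⟩
    have hdc' : ∀ σ ∈ F \ {σ₀, insert u σ₀}, ∀ τ ⊆ σ, τ ∈ F \ {σ₀, insert u σ₀} := by
      intro σ hσ τ hτ
      rw [Finset.mem_sdiff] at hσ ⊢
      rcases hσ with ⟨hσF, hσni⟩
      simp only [Finset.mem_insert, Finset.mem_singleton] at hσni ⊢
      push_neg at hσni ⊢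
      refine ⟨hdc σ hσF τ hτ, ?_, ?_⟩
      · intro hτσ₀
        subst hτσ₀
        rcases lt_or_eq_of_le hτ with h | h
        · exact hσni.2 (huniq σ hσF h)
        · exact hσni.1 h.symm
      · intro hττ₀
        subst hττ₀
        exact hσni.2 (huniq σ hσF (lt_of_lt_of_le hss hτ))
    have hyp' : ∀ σ ∈ F \ {σ₀, insert u σ₀}, t ⊆ σ → u ∉ σ →
        insert u σ ∈ F \ {σ₀, insert u σ₀} := by
      intro σ hσ hts huσ
      rw [Finset.mem_sdiff] at hσ ⊢
      rcases hσ with ⟨hσF, hσni⟩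
      simp only [Finset.mem_insert, Finset.mem_singleton] at hσni ⊢
      push_neg at hσni ⊢
      refine ⟨hyp σ hσF hts huσ, ?_, ?_⟩
      · intro h
        exact huσ₀ (h ▸ Finset.mem_insert_self u σ)
      · intro h
        apply hσni.1
        have h1 : σ = (insert u σ).erase u := (Finset.erase_insert huσ).symm
        rw [h1, h, Finset.erase_insert huσ₀]
    have hcol : IsElemCollapse F (F \ {σ₀, insert u σ₀}) :=
      ⟨σ₀, insert u σ₀, hσ₀F, hτ₀F, hss, hcard, huniq, rfl⟩
    have hstep : AbsCplx.Step (packCplx F h0 hdc) (packCplx (F \ {σ₀, insert u σ₀}) h0' hdc') :=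
      Or.inr ⟨rfl, hcol⟩
    have hfe : G = (F \ {σ₀, insert u σ₀}).filter (fun σ => ¬ t ⊆ σ) := by
      rw [hG]
      ext σ
      simp only [Finset.mem_filter, Finset.mem_sdiff, Finset.mem_insert, Finset.mem_singleton]
      constructor
      · rintro ⟨h1, h2⟩
        refine ⟨⟨h1, ?_⟩, h2⟩
        push_neg
        constructor
        · rintro rfl; exact absurd htσ₀ h2
        · rintro rfl; exact absurd (htσ₀.trans (Finset.subset_insert _ _)) h2
      · rintro ⟨⟨h1, _⟩, h2⟩; exact ⟨h1, h2⟩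
    have hcardlt : (F \ {σ₀, insert u σ₀}).card < F.card := by
      apply Finset.card_lt_card
      constructor
      · exact Finset.sdiff_subset
      · intro hsub
        have := hsub hσ₀F
        rw [Finset.mem_sdiff] at this
        simp at this
    exact Relation.EqvGen.trans _ _ _ (Relation.EqvGen.rel _ _ hstep)
      (fold_eqv t u hu hne _ h0' hdc' hyp' G hfe h0G hdcG)
  · have hfe : F.filter (fun σ => ¬ t ⊆ σ) = F := by
      apply Finset.filter_true_of_mem
      intro σ hσ hts
      by_cases huσ : u ∈ σ
      · have h1 : σ.erase u ∈ F := hdc σ hσ _ (Finset.erase_subset _ _)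
        have h2 : t ⊆ σ.erase u := fun x hx =>
          Finset.mem_erase.2 ⟨fun hxu => hu (hxu ▸ hx), hts hx⟩
        exact hA ⟨_, Finset.mem_filter.2 ⟨h1, h2, Finset.notMem_erase _ _⟩⟩
      · exact hA ⟨_, Finset.mem_filter.2 ⟨hσ, hts, huσ⟩⟩
    exact SimpleHtpyEq.of_eq (packCplx_congr (hG.trans hfe) h0G hdcG h0 hdc).symm
termination_by F.card
decreasing_by exact hcardlt
/-! ### The concrete reduction for `M^H` -/

section MHreduction

variable (k : ℕ)

/-- vertex type of `M^H_{1,k+3}` -/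
abbrev Vt := Fin 2 × Fin (2 * (k + 2 + 1))

/-- named vertices -/
def pA0 : Vt k := (⟨0, by omega⟩, ⟨0, by omega⟩)
def pA1 : Vt k := (⟨0, by omega⟩, ⟨1, by omega⟩)
def pA2 : Vt k := (⟨0, by omega⟩, ⟨2, by omega⟩)
def pA3 : Vt k := (⟨0, by omega⟩, ⟨3, by omega⟩)
def pAL : Vt k := (⟨0, by omega⟩, ⟨2*k+5, by omega⟩)
def pB0 : Vt k := (⟨1, by omega⟩, ⟨0, by omega⟩)
def pB1 : Vt k := (⟨1, by omega⟩, ⟨1, by omega⟩)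
def pB2 : Vt k := (⟨1, by omega⟩, ⟨2, by omega⟩)
def pB3 : Vt k := (⟨1, by omega⟩, ⟨3, by omega⟩)
def pBL : Vt k := (⟨1, by omega⟩, ⟨2*k+5, by omega⟩)

/-- the edited graph `G'`: rungs at odd columns and column `0`, row edges except
between columns `1,2`, the Möbius twist, and the two long edges `{2, 2k+5}`. -/
def Ged : SimpleGraph (Vt k) := SimpleGraph.fromRel fun u v =>
  ((u.1 : ℕ) + 1 = (v.1 : ℕ) ∧ (u.2 : ℕ) = (v.2 : ℕ) ∧
      ((u.2 : ℕ) % 2 = 1 ∨ (u.2 : ℕ) = 0)) ∨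
  ((u.1 : ℕ) = (v.1 : ℕ) ∧ (u.2 : ℕ) + 1 = (v.2 : ℕ) ∧ (u.2 : ℕ) ≠ 1) ∨
  ((u.2 : ℕ) = 2*k+5 ∧ (v.2 : ℕ) = 0 ∧ (u.1 : ℕ) + (v.1 : ℕ) = 1) ∨
  ((u.1 : ℕ) = (v.1 : ℕ) ∧ (u.2 : ℕ) = 2 ∧ (v.2 : ℕ) = 2*k+5)

instance : DecidableRel (Ged k).Adj := fun a b =>
  decidable_of_iff _ (SimpleGraph.fromRel_adj _ a b).symm

/-- adjacency of `gridMH (k+3)` in ℕ coordinates -/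
lemma MH_adj_iff (u v : Vt k) :
    (gridMH (k + 2 + 1)).Adj u v ↔
      ¬((u.1 : ℕ) = (v.1 : ℕ) ∧ (u.2 : ℕ) = (v.2 : ℕ)) ∧
      ((((u.1:ℕ)+1 = (v.1:ℕ) ∧ (u.2:ℕ) = (v.2:ℕ) ∧ (u.2:ℕ) % 2 = 1) ∨
        ((u.1:ℕ) = (v.1:ℕ) ∧ (u.2:ℕ)+1 = (v.2:ℕ)) ∨
        ((u.2:ℕ) = 2*k+5 ∧ (v.2:ℕ) = 0 ∧ (u.1:ℕ)+(v.1:ℕ) = 1)) ∨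
       (((v.1:ℕ)+1 = (u.1:ℕ) ∧ (v.2:ℕ) = (u.2:ℕ) ∧ (v.2:ℕ) % 2 = 1) ∨
        ((v.1:ℕ) = (u.1:ℕ) ∧ (v.2:ℕ)+1 = (u.2:ℕ)) ∨
        ((v.2:ℕ) = 2*k+5 ∧ (u.2:ℕ) = 0 ∧ (v.1:ℕ)+(u.1:ℕ) = 1))) := by
  rw [gridMH, SimpleGraph.fromRel_adj]
  constructor
  · rintro ⟨hne, h⟩
    refine ⟨?_, ?_⟩
    · rintro ⟨h1, h2⟩
      exact hne (Prod.ext (Fin.ext h1) (Fin.ext h2))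
    · have e : 2 * (k + 2 + 1) - 1 = 2*k+5 := by omega
      rcases h with (h|h|h)|(h|h|h)
      · exact Or.inl (Or.inl ⟨h.1, congrArg Fin.val h.2.1, Nat.not_even_iff.1 h.2.2⟩)
      · exact Or.inl (Or.inr (Or.inl ⟨congrArg Fin.val h.1, h.2⟩))
      · exact Or.inl (Or.inr (Or.inr ⟨e ▸ h.1, h.2.1, h.2.2⟩))
      · exact Or.inr (Or.inl ⟨h.1, congrArg Fin.val h.2.1, Nat.not_even_iff.1 h.2.2⟩)
      · exact Or.inr (Or.inr (Or.inl ⟨congrArg Fin.val h.1, h.2⟩))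
      · exact Or.inr (Or.inr (Or.inr ⟨e ▸ h.1, h.2.1, h.2.2⟩))
  · rintro ⟨hne, h⟩
    have e : 2*k+5 = 2 * (k + 2 + 1) - 1 := by omega
    refine ⟨fun hh => hne ⟨congrArg (fun x => (x.1 : ℕ)) hh, congrArg (fun x => (x.2 : ℕ)) hh⟩, ?_⟩
    rcases h with (h|h|h)|(h|h|h)
    · exact Or.inl (Or.inl ⟨h.1, Fin.ext h.2.1, Nat.not_even_iff.2 h.2.2⟩)
    · exact Or.inl (Or.inr (Or.inl ⟨Fin.ext h.1, h.2⟩))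
    · exact Or.inl (Or.inr (Or.inr ⟨e ▸ h.1, h.2.1, h.2.2⟩))
    · exact Or.inr (Or.inl ⟨h.1, Fin.ext h.2.1, Nat.not_even_iff.2 h.2.2⟩)
    · exact Or.inr (Or.inr (Or.inl ⟨Fin.ext h.1, h.2⟩))
    · exact Or.inr (Or.inr (Or.inr ⟨e ▸ h.1, h.2.1, h.2.2⟩))

/-- adjacency of `Ged` in ℕ coordinates -/
lemma Ged_adj_iff (u v : Vt k) :
    (Ged k).Adj u v ↔
      ¬((u.1 : ℕ) = (v.1 : ℕ) ∧ (u.2 : ℕ) = (v.2 : ℕ)) ∧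
      ((((u.1:ℕ)+1 = (v.1:ℕ) ∧ (u.2:ℕ) = (v.2:ℕ) ∧ ((u.2:ℕ) % 2 = 1 ∨ (u.2:ℕ) = 0)) ∨
        ((u.1:ℕ) = (v.1:ℕ) ∧ (u.2:ℕ)+1 = (v.2:ℕ) ∧ (u.2:ℕ) ≠ 1) ∨
        ((u.2:ℕ) = 2*k+5 ∧ (v.2:ℕ) = 0 ∧ (u.1:ℕ)+(v.1:ℕ) = 1) ∨
        ((u.1:ℕ) = (v.1:ℕ) ∧ (u.2:ℕ) = 2 ∧ (v.2:ℕ) = 2*k+5)) ∨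
       (((v.1:ℕ)+1 = (u.1:ℕ) ∧ (v.2:ℕ) = (u.2:ℕ) ∧ ((v.2:ℕ) % 2 = 1 ∨ (v.2:ℕ) = 0)) ∨
        ((v.1:ℕ) = (u.1:ℕ) ∧ (v.2:ℕ)+1 = (u.2:ℕ) ∧ (v.2:ℕ) ≠ 1) ∨
        ((v.2:ℕ) = 2*k+5 ∧ (u.2:ℕ) = 0 ∧ (v.1:ℕ)+(u.1:ℕ) = 1) ∨
        ((v.1:ℕ) = (u.1:ℕ) ∧ (v.2:ℕ) = 2 ∧ (u.2:ℕ) = 2*k+5))) := by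
  rw [Ged, SimpleGraph.fromRel_adj]
  constructor
  · rintro ⟨hne, h⟩
    exact ⟨fun hh => hne (Prod.ext (Fin.ext hh.1) (Fin.ext hh.2)), h⟩
  · rintro ⟨hne, h⟩
    exact ⟨fun hh => hne ⟨congrArg (fun x => (x.1 : ℕ)) hh,
      congrArg (fun x => (x.2 : ℕ)) hh⟩, h⟩

end MHreduction
section MHlemmas
variable (k : ℕ)

@[simp] lemma pA0_r : ((pA0 k).1 : ℕ) = 0 := rfl
@[simp] lemma pA0_c : ((pA0 k).2 : ℕ) = 0 := rfl
@[simp] lemma pA1_r : ((pA1 k).1 : ℕ) = 0 := rfl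
@[simp] lemma pA1_c : ((pA1 k).2 : ℕ) = 1 := rfl
@[simp] lemma pA2_r : ((pA2 k).1 : ℕ) = 0 := rfl
@[simp] lemma pA2_c : ((pA2 k).2 : ℕ) = 2 := rfl
@[simp] lemma pA3_r : ((pA3 k).1 : ℕ) = 0 := rfl
@[simp] lemma pA3_c : ((pA3 k).2 : ℕ) = 3 := rfl
@[simp] lemma pAL_r : ((pAL k).1 : ℕ) = 0 := rfl
@[simp] lemma pAL_c : ((pAL k).2 : ℕ) = 2*k+5 := rfl
@[simp] lemma pB0_r : ((pB0 k).1 : ℕ) = 1 := rfl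
@[simp] lemma pB0_c : ((pB0 k).2 : ℕ) = 0 := rfl
@[simp] lemma pB1_r : ((pB1 k).1 : ℕ) = 1 := rfl
@[simp] lemma pB1_c : ((pB1 k).2 : ℕ) = 1 := rfl
@[simp] lemma pB2_r : ((pB2 k).1 : ℕ) = 1 := rfl
@[simp] lemma pB2_c : ((pB2 k).2 : ℕ) = 2 := rfl
@[simp] lemma pB3_r : ((pB3 k).1 : ℕ) = 1 := rfl
@[simp] lemma pB3_c : ((pB3 k).2 : ℕ) = 3 := rfl
@[simp] lemma pBL_r : ((pBL k).1 : ℕ) = 1 := rfl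
@[simp] lemma pBL_c : ((pBL k).2 : ℕ) = 2*k+5 := rfl

lemma eq_mkV_iff (x : Vt k) {r j : ℕ} (hr : r < 2) (hj : j < 2*(k+2+1)) :
    x = ((⟨r, hr⟩, ⟨j, hj⟩) : Vt k) ↔ (x.1 : ℕ) = r ∧ (x.2 : ℕ) = j := by
  constructor
  · rintro rfl; exact ⟨rfl, rfl⟩
  · rintro ⟨h1, h2⟩; exact Prod.ext (Fin.ext h1) (Fin.ext h2)

lemma eq_pA0_iff (x : Vt k) : x = pA0 k ↔ (x.1 : ℕ) = 0 ∧ (x.2 : ℕ) = 0 :=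
  eq_mkV_iff k x (by omega) (by omega)

lemma eq_pA1_iff (x : Vt k) : x = pA1 k ↔ (x.1 : ℕ) = 0 ∧ (x.2 : ℕ) = 1 :=
  eq_mkV_iff k x (by omega) (by omega)

lemma eq_pA2_iff (x : Vt k) : x = pA2 k ↔ (x.1 : ℕ) = 0 ∧ (x.2 : ℕ) = 2 :=
  eq_mkV_iff k x (by omega) (by omega)

lemma eq_pA3_iff (x : Vt k) : x = pA3 k ↔ (x.1 : ℕ) = 0 ∧ (x.2 : ℕ) = 3 :=
  eq_mkV_iff k x (by omega) (by omega)

lemma eq_pAL_iff (x : Vt k) : x = pAL k ↔ (x.1 : ℕ) = 0 ∧ (x.2 : ℕ) = 2*k+5 :=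
  eq_mkV_iff k x (by omega) (by omega)

lemma eq_pB0_iff (x : Vt k) : x = pB0 k ↔ (x.1 : ℕ) = 1 ∧ (x.2 : ℕ) = 0 :=
  eq_mkV_iff k x (by omega) (by omega)

lemma eq_pB1_iff (x : Vt k) : x = pB1 k ↔ (x.1 : ℕ) = 1 ∧ (x.2 : ℕ) = 1 :=
  eq_mkV_iff k x (by omega) (by omega)

lemma eq_pB2_iff (x : Vt k) : x = pB2 k ↔ (x.1 : ℕ) = 1 ∧ (x.2 : ℕ) = 2 :=
  eq_mkV_iff k x (by omega) (by omega)

lemma eq_pB3_iff (x : Vt k) : x = pB3 k ↔ (x.1 : ℕ) = 1 ∧ (x.2 : ℕ) = 3 :=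
  eq_mkV_iff k x (by omega) (by omega)

lemma eq_pBL_iff (x : Vt k) : x = pBL k ↔ (x.1 : ℕ) = 1 ∧ (x.2 : ℕ) = 2*k+5 :=
  eq_mkV_iff k x (by omega) (by omega)

lemma nbhdMH_pA0 (y : Vt k) (h : (gridMH (k+2+1)).Adj (pA0 k) y) : y = pA1 k ∨ y = pBL k := by
  rw [MH_adj_iff] at h
  simp only [pA0_r, pA0_c] at h
  have hb1 : (y.1 : ℕ) < 2 := y.1.isLt
  have hb2 : (y.2 : ℕ) < 2*(k+2+1) := y.2.isLt
  rw [eq_pA1_iff, eq_pBL_iff]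
  omega

lemma nbhdMH_pB0 (y : Vt k) (h : (gridMH (k+2+1)).Adj (pB0 k) y) : y = pB1 k ∨ y = pAL k := by
  rw [MH_adj_iff] at h
  simp only [pB0_r, pB0_c] at h
  have hb1 : (y.1 : ℕ) < 2 := y.1.isLt
  have hb2 : (y.2 : ℕ) < 2*(k+2+1) := y.2.isLt
  rw [eq_pB1_iff, eq_pAL_iff]
  omega

lemma nbhdMH_pA2 (y : Vt k) (h : (gridMH (k+2+1)).Adj (pA2 k) y) : y = pA1 k ∨ y = pA3 k := by
  rw [MH_adj_iff] at h
  simp only [pA2_r, pA2_c] at h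
  have hb1 : (y.1 : ℕ) < 2 := y.1.isLt
  have hb2 : (y.2 : ℕ) < 2*(k+2+1) := y.2.isLt
  rw [eq_pA1_iff, eq_pA3_iff]
  omega

lemma nbhdMH_pB2 (y : Vt k) (h : (gridMH (k+2+1)).Adj (pB2 k) y) : y = pB1 k ∨ y = pB3 k := by
  rw [MH_adj_iff] at h
  simp only [pB2_r, pB2_c] at h
  have hb1 : (y.1 : ℕ) < 2 := y.1.isLt
  have hb2 : (y.2 : ℕ) < 2*(k+2+1) := y.2.isLt
  rw [eq_pB1_iff, eq_pB3_iff]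
  omega

lemma nbhdGed_pA0 (y : Vt k) (h : (Ged k).Adj (pA0 k) y) : y = pA1 k ∨ y = pBL k ∨ y = pB0 k := by
  rw [Ged_adj_iff] at h
  simp only [pA0_r, pA0_c] at h
  have hb1 : (y.1 : ℕ) < 2 := y.1.isLt
  have hb2 : (y.2 : ℕ) < 2*(k+2+1) := y.2.isLt
  rw [eq_pA1_iff, eq_pBL_iff, eq_pB0_iff]
  omega

lemma nbhdGed_pB0 (y : Vt k) (h : (Ged k).Adj (pB0 k) y) : y = pB1 k ∨ y = pAL k ∨ y = pA0 k := by
  rw [Ged_adj_iff] at h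
  simp only [pB0_r, pB0_c] at h
  have hb1 : (y.1 : ℕ) < 2 := y.1.isLt
  have hb2 : (y.2 : ℕ) < 2*(k+2+1) := y.2.isLt
  rw [eq_pB1_iff, eq_pAL_iff, eq_pA0_iff]
  omega

lemma nbhdGed_pB1 (y : Vt k) (h : (Ged k).Adj (pB1 k) y) : y = pB0 k ∨ y = pA1 k := by
  rw [Ged_adj_iff] at h
  simp only [pB1_r, pB1_c] at h
  have hb1 : (y.1 : ℕ) < 2 := y.1.isLt
  have hb2 : (y.2 : ℕ) < 2*(k+2+1) := y.2.isLt
  rw [eq_pB0_iff, eq_pA1_iff]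
  omega

lemma nbhdGed_pA1 (y : Vt k) (h : (Ged k).Adj (pA1 k) y) : y = pA0 k ∨ y = pB1 k := by
  rw [Ged_adj_iff] at h
  simp only [pA1_r, pA1_c] at h
  have hb1 : (y.1 : ℕ) < 2 := y.1.isLt
  have hb2 : (y.2 : ℕ) < 2*(k+2+1) := y.2.isLt
  rw [eq_pA0_iff, eq_pB1_iff]
  omega

lemma adjMH_pA1_pA2 : (gridMH (k+2+1)).Adj (pA1 k) (pA2 k) := by
  rw [MH_adj_iff]
  simp only [pA1_r, pA1_c, pA2_r, pA2_c]
  constructor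
  · simp
  · simp
    try omega

lemma adjMH_pBL_pAL : (gridMH (k+2+1)).Adj (pBL k) (pAL k) := by
  rw [MH_adj_iff]
  simp only [pBL_r, pBL_c, pAL_r, pAL_c]
  constructor
  · simp
  · simp
    try omega

lemma adjMH_pB1_pB2 : (gridMH (k+2+1)).Adj (pB1 k) (pB2 k) := by
  rw [MH_adj_iff]
  simp only [pB1_r, pB1_c, pB2_r, pB2_c]
  constructor
  · simp
  · simp
    try omega

lemma adjMH_pAL_pBL : (gridMH (k+2+1)).Adj (pAL k) (pBL k) := by
  rw [MH_adj_iff]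
  simp only [pAL_r, pAL_c, pBL_r, pBL_c]
  constructor
  · simp
  · simp
    try omega

lemma adjMH_pA1_pA0 : (gridMH (k+2+1)).Adj (pA1 k) (pA0 k) := by
  rw [MH_adj_iff]
  simp only [pA1_r, pA1_c, pA0_r, pA0_c]
  constructor
  · simp
  · simp
    try omega

lemma adjMH_pA3_pB3 : (gridMH (k+2+1)).Adj (pA3 k) (pB3 k) := by
  rw [MH_adj_iff]
  simp only [pA3_r, pA3_c, pB3_r, pB3_c]
  constructor
  · simp
  · simp
    try omega

lemma adjMH_pAL_pB0 : (gridMH (k+2+1)).Adj (pAL k) (pB0 k) := by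
  rw [MH_adj_iff]
  simp only [pAL_r, pAL_c, pB0_r, pB0_c]
  constructor
  · simp
  · simp
    try omega

lemma adjMH_pB1_pB0 : (gridMH (k+2+1)).Adj (pB1 k) (pB0 k) := by
  rw [MH_adj_iff]
  simp only [pB1_r, pB1_c, pB0_r, pB0_c]
  constructor
  · simp
  · simp
    try omega

lemma adjMH_pBL_pA0 : (gridMH (k+2+1)).Adj (pBL k) (pA0 k) := by
  rw [MH_adj_iff]
  simp only [pBL_r, pBL_c, pA0_r, pA0_c]
  constructor
  · simp
  · simp
    try omega

lemma adjGed_pA0_pB0 : (Ged k).Adj (pA0 k) (pB0 k) := by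
  rw [Ged_adj_iff]
  simp only [pA0_r, pA0_c, pB0_r, pB0_c]
  constructor
  · simp
  · simp
    try omega

lemma adjGed_pA2_pAL : (Ged k).Adj (pA2 k) (pAL k) := by
  rw [Ged_adj_iff]
  simp only [pA2_r, pA2_c, pAL_r, pAL_c]
  constructor
  · simp
  · simp
    try omega

lemma adjGed_pB2_pBL : (Ged k).Adj (pB2 k) (pBL k) := by
  rw [Ged_adj_iff]
  simp only [pB2_r, pB2_c, pBL_r, pBL_c]
  constructor
  · simp
  · simp
    try omega

lemma adjGed_pA1_pB1 : (Ged k).Adj (pA1 k) (pB1 k) := by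
  rw [Ged_adj_iff]
  simp only [pA1_r, pA1_c, pB1_r, pB1_c]
  constructor
  · simp
  · simp
    try omega

lemma adjGed_pBL_pB2 : (Ged k).Adj (pBL k) (pB2 k) := by
  rw [Ged_adj_iff]
  simp only [pBL_r, pBL_c, pB2_r, pB2_c]
  constructor
  · simp
  · simp
    try omega

lemma adjGed_pB0_pB1 : (Ged k).Adj (pB0 k) (pB1 k) := by
  rw [Ged_adj_iff]
  simp only [pB0_r, pB0_c, pB1_r, pB1_c]
  constructor
  · simp
  · simp
    try omega

lemma adjGed_pB1_pA1 : (Ged k).Adj (pB1 k) (pA1 k) := by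
  rw [Ged_adj_iff]
  simp only [pB1_r, pB1_c, pA1_r, pA1_c]
  constructor
  · simp
  · simp
    try omega

lemma adjGed_pAL_pA2 : (Ged k).Adj (pAL k) (pA2 k) := by
  rw [Ged_adj_iff]
  simp only [pAL_r, pAL_c, pA2_r, pA2_c]
  constructor
  · simp
  · simp
    try omega

lemma adjGed_pA0_pA1 : (Ged k).Adj (pA0 k) (pA1 k) := by
  rw [Ged_adj_iff]
  simp only [pA0_r, pA0_c, pA1_r, pA1_c]
  constructor
  · simp
  · simp
    try omega

lemma adjGed_pB0_pA0 : (Ged k).Adj (pB0 k) (pA0 k) := by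
  rw [Ged_adj_iff]
  simp only [pB0_r, pB0_c, pA0_r, pA0_c]
  constructor
  · simp
  · simp
    try omega

lemma adjGed_pA1_pA0 : (Ged k).Adj (pA1 k) (pA0 k) := by
  rw [Ged_adj_iff]
  simp only [pA1_r, pA1_c, pA0_r, pA0_c]
  constructor
  · simp
  · simp
    try omega

lemma adjGed_pB1_pB0 : (Ged k).Adj (pB1 k) (pB0 k) := by
  rw [Ged_adj_iff]
  simp only [pB1_r, pB1_c, pB0_r, pB0_c]
  constructor
  · simp
  · simp
    try omega

end MHlemmas
section MHcplx
variable (k : ℕ)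


lemma MH_adj_cases (x y : Vt k) (h : (gridMH (k+2+1)).Adj x y) :
    (Ged k).Adj x y ∨ (x = pA1 k ∧ y = pA2 k) ∨ (x = pA2 k ∧ y = pA1 k) ∨
    (x = pB1 k ∧ y = pB2 k) ∨ (x = pB2 k ∧ y = pB1 k) := by
  rw [MH_adj_iff] at h
  obtain ⟨hne, h⟩ := h
  have hx1 : (x.1 : ℕ) < 2 := x.1.isLt
  have hy1 : (y.1 : ℕ) < 2 := y.1.isLt
  rcases h with (h|h|h)|(h|h|h)
  · exact Or.inl ((Ged_adj_iff k x y).mpr ⟨hne, Or.inl (Or.inl ⟨h.1, h.2.1, Or.inl h.2.2⟩)⟩)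
  · by_cases h12 : (x.2 : ℕ) = 1
    · refine Or.inr ?_
      simp only [eq_pA1_iff, eq_pA2_iff, eq_pB1_iff, eq_pB2_iff]
      omega
    · exact Or.inl ((Ged_adj_iff k x y).mpr ⟨hne, Or.inl (Or.inr (Or.inl ⟨h.1, h.2, h12⟩))⟩)
  · exact Or.inl ((Ged_adj_iff k x y).mpr ⟨hne, Or.inl (Or.inr (Or.inr (Or.inl h)))⟩)
  · exact Or.inl ((Ged_adj_iff k x y).mpr ⟨hne, Or.inr (Or.inl ⟨h.1, h.2.1, Or.inl h.2.2⟩)⟩)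
  · by_cases h12 : (y.2 : ℕ) = 1
    · refine Or.inr ?_
      simp only [eq_pA1_iff, eq_pA2_iff, eq_pB1_iff, eq_pB2_iff]
      omega
    · exact Or.inl ((Ged_adj_iff k x y).mpr ⟨hne, Or.inr (Or.inr (Or.inl ⟨h.1, h.2, h12⟩))⟩)
  · exact Or.inl ((Ged_adj_iff k x y).mpr ⟨hne, Or.inr (Or.inr (Or.inr (Or.inl h)))⟩)

lemma Ged_adj_cases (x y : Vt k) (h : (Ged k).Adj x y) :
    (gridMH (k+2+1)).Adj x y ∨ (x = pA0 k ∧ y = pB0 k) ∨ (x = pB0 k ∧ y = pA0 k) ∨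
    (x = pA2 k ∧ y = pAL k) ∨ (x = pAL k ∧ y = pA2 k) ∨
    (x = pB2 k ∧ y = pBL k) ∨ (x = pBL k ∧ y = pB2 k) := by
  rw [Ged_adj_iff] at h
  obtain ⟨hne, h⟩ := h
  have hx1 : (x.1 : ℕ) < 2 := x.1.isLt
  have hy1 : (y.1 : ℕ) < 2 := y.1.isLt
  rcases h with (h|h|h|h)|(h|h|h|h)
  · rcases h.2.2 with ho | h0
    · exact Or.inl ((MH_adj_iff k x y).mpr ⟨hne, Or.inl (Or.inl ⟨h.1, h.2.1, ho⟩)⟩)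
    · refine Or.inr ?_
      simp only [eq_pA0_iff, eq_pB0_iff, eq_pA2_iff, eq_pAL_iff, eq_pB2_iff, eq_pBL_iff]
      have := h.1; have := h.2.1
      omega
  · exact Or.inl ((MH_adj_iff k x y).mpr ⟨hne, Or.inl (Or.inr (Or.inl ⟨h.1, h.2.1⟩))⟩)
  · exact Or.inl ((MH_adj_iff k x y).mpr ⟨hne, Or.inl (Or.inr (Or.inr h))⟩)
  · refine Or.inr ?_
    simp only [eq_pA0_iff, eq_pB0_iff, eq_pA2_iff, eq_pAL_iff, eq_pB2_iff, eq_pBL_iff]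
    omega
  · rcases h.2.2 with ho | h0
    · exact Or.inl ((MH_adj_iff k x y).mpr ⟨hne, Or.inr (Or.inl ⟨h.1, h.2.1, ho⟩)⟩)
    · refine Or.inr ?_
      simp only [eq_pA0_iff, eq_pB0_iff, eq_pA2_iff, eq_pAL_iff, eq_pB2_iff, eq_pBL_iff]
      have := h.1; have := h.2.1
      omega
  · exact Or.inl ((MH_adj_iff k x y).mpr ⟨hne, Or.inr (Or.inr (Or.inl ⟨h.1, h.2.1⟩))⟩)
  · exact Or.inl ((MH_adj_iff k x y).mpr ⟨hne, Or.inr (Or.inr (Or.inr h))⟩)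
  · refine Or.inr ?_
    simp only [eq_pA0_iff, eq_pB0_iff, eq_pA2_iff, eq_pAL_iff, eq_pB2_iff, eq_pBL_iff]
    omega

/-- the patterns -/
def ea : Finset (Vt k) := {pA2 k, pAL k}
def eb : Finset (Vt k) := {pB2 k, pBL k}
def hh1 : Finset (Vt k) := {pA0 k, pB0 k, pB3 k}
def ee0 : Finset (Vt k) := {pA0 k, pB0 k}
def ta : Finset (Vt k) := {pA1 k, pA2 k}
def tb : Finset (Vt k) := {pB1 k, pB2 k}
def sA0 : Finset (Vt k) := {pA0 k}
def sB0 : Finset (Vt k) := {pB0 k}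

/-- the chain of complexes -/
def K0 : Finset (Finset (Vt k)) := indepFaces (gridMH (k+2+1))
def K1 : Finset (Finset (Vt k)) := (K0 k).filter (fun σ => ¬ ea k ⊆ σ)
def K2 : Finset (Finset (Vt k)) := (K1 k).filter (fun σ => ¬ eb k ⊆ σ)
def K3 : Finset (Finset (Vt k)) := (K2 k).filter (fun σ => ¬ hh1 k ⊆ σ)
def K4 : Finset (Finset (Vt k)) := (K3 k).filter (fun σ => ¬ ee0 k ⊆ σ)
def K7 : Finset (Finset (Vt k)) := indepFaces (Ged k)
def K6 : Finset (Finset (Vt k)) := (K7 k).filter (fun σ => ¬ tb k ⊆ σ)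
def K5 : Finset (Finset (Vt k)) := (K6 k).filter (fun σ => ¬ ta k ⊆ σ)
def K8 : Finset (Finset (Vt k)) := (K7 k).filter (fun σ => ¬ sA0 k ⊆ σ)
def K9 : Finset (Finset (Vt k)) := (K8 k).filter (fun σ => ¬ sB0 k ⊆ σ)

lemma mem_indepFaces {W : Type} [Fintype W] [DecidableEq W] (G : SimpleGraph W)
    [DecidableRel G.Adj] (σ : Finset W) :
    σ ∈ indepFaces G ↔ ∀ a ∈ σ, ∀ b ∈ σ, ¬ G.Adj a b := by
  simp [indepFaces, indepFacesOn, Finset.mem_filter, Finset.mem_powerset, Finset.subset_univ]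

lemma empty_indepFaces {W : Type} [Fintype W] [DecidableEq W] (G : SimpleGraph W)
    [DecidableRel G.Adj] : ∅ ∈ indepFaces G := by
  simp [mem_indepFaces]

lemma dc_indepFaces {W : Type} [Fintype W] [DecidableEq W] (G : SimpleGraph W)
    [DecidableRel G.Adj] : ∀ σ ∈ indepFaces G, ∀ τ ⊆ σ, τ ∈ indepFaces G := by
  intro σ hσ τ hτ
  rw [mem_indepFaces] at hσ ⊢
  exact fun a ha b hb => hσ a (hτ ha) b (hτ hb)

lemma dc_filt {W : Type} [DecidableEq W] {F : Finset (Finset W)}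
    (hdc : ∀ σ ∈ F, ∀ τ ⊆ σ, τ ∈ F) (p : Finset W) :
    ∀ σ ∈ F.filter (fun σ => ¬ p ⊆ σ), ∀ τ ⊆ σ, τ ∈ F.filter (fun σ => ¬ p ⊆ σ) := by
  intro σ hσ τ hτ
  rcases Finset.mem_filter.1 hσ with ⟨h1, h2⟩
  exact Finset.mem_filter.2 ⟨hdc σ h1 τ hτ, fun hc => h2 (hc.trans hτ)⟩

lemma empty_filt {W : Type} [DecidableEq W] {F : Finset (Finset W)}
    (h0 : ∅ ∈ F) {p : Finset W} (hp : p.Nonempty) :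
    ∅ ∈ F.filter (fun σ => ¬ p ⊆ σ) :=
  Finset.mem_filter.2 ⟨h0, fun hc => hp.ne_empty (Finset.subset_empty.1 hc)⟩

end MHcplx
section MHfolds
variable (k : ℕ)

lemma insert_indep {W : Type} [Fintype W] [DecidableEq W] (G : SimpleGraph W)
    [DecidableRel G.Adj] {σ : Finset W} (hσ : σ ∈ indepFaces G) {u : W}
    (h : ∀ y ∈ σ, ¬ G.Adj u y) : insert u σ ∈ indepFaces G := by
  rw [mem_indepFaces] at hσ ⊢
  intro a ha b hb
  rcases Finset.mem_insert.1 ha with ha' | ha'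
  · rcases Finset.mem_insert.1 hb with hb' | hb'
    · rw [ha', hb']; exact fun hadj => G.irrefl hadj
    · rw [ha']; exact h b hb'
  · rcases Finset.mem_insert.1 hb with hb' | hb'
    · rw [hb']; exact fun hadj => h a ha' hadj.symm
    · exact hσ a ha' b hb'

lemma hyp1 : ∀ σ ∈ K0 k, ea k ⊆ σ → pA0 k ∉ σ → insert (pA0 k) σ ∈ K0 k := by
  intro σ hσ hts _
  have hA2 : pA2 k ∈ σ := hts (by simp [ea])
  have hAL : pAL k ∈ σ := hts (by simp [ea])
  refine insert_indep _ hσ ?_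
  intro y hy hadj
  rw [K0, mem_indepFaces] at hσ
  rcases nbhdMH_pA0 k y hadj with rfl | rfl
  · exact hσ _ hy _ hA2 (adjMH_pA1_pA2 k)
  · exact hσ _ hy _ hAL (adjMH_pBL_pAL k)

lemma hyp2 : ∀ σ ∈ K1 k, eb k ⊆ σ → pB0 k ∉ σ → insert (pB0 k) σ ∈ K1 k := by
  intro σ hσ hts _
  obtain ⟨hσ0, hea⟩ := Finset.mem_filter.1 hσ
  have hB2 : pB2 k ∈ σ := hts (by simp [eb])
  have hBL : pBL k ∈ σ := hts (by simp [eb])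
  have hind := (mem_indepFaces _ σ).1 hσ0
  refine Finset.mem_filter.2 ⟨insert_indep _ hσ0 ?_, ?_⟩
  · intro y hy hadj
    rcases nbhdMH_pB0 k y hadj with rfl | rfl
    · exact hind _ hy _ hB2 (adjMH_pB1_pB2 k)
    · exact hind _ hy _ hBL (adjMH_pAL_pBL k)
  · rw [Finset.subset_insert_iff_of_notMem (by simp [ea, eq_pA2_iff, eq_pAL_iff])]
    exact hea

lemma hyp3 : ∀ σ ∈ K2 k, hh1 k ⊆ σ → pA2 k ∉ σ → insert (pA2 k) σ ∈ K2 k := by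
  intro σ hσ hts _
  obtain ⟨hσ1, heb⟩ := Finset.mem_filter.1 hσ
  obtain ⟨hσ0, hea⟩ := Finset.mem_filter.1 hσ1
  have hA0 : pA0 k ∈ σ := hts (by simp [hh1])
  have hB0 : pB0 k ∈ σ := hts (by simp [hh1])
  have hB3 : pB3 k ∈ σ := hts (by simp [hh1])
  have hind := (mem_indepFaces _ σ).1 hσ0
  refine Finset.mem_filter.2 ⟨Finset.mem_filter.2 ⟨insert_indep _ hσ0 ?_, ?_⟩, ?_⟩
  · intro y hy hadj
    rcases nbhdMH_pA2 k y hadj with rfl | rfl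
    · exact hind _ hy _ hA0 (adjMH_pA1_pA0 k)
    · exact hind _ hy _ hB3 (adjMH_pA3_pB3 k)
  · intro hc
    have hAL : pAL k ∈ σ := by
      have := hc (show pAL k ∈ ea k by simp [ea])
      rcases Finset.mem_insert.1 this with h | h
      · exact absurd h (by simp [eq_pA2_iff])
      · exact h
    exact hind _ hAL _ hB0 (adjMH_pAL_pB0 k)
  · rw [Finset.subset_insert_iff_of_notMem (by simp [eb, eq_pB2_iff, eq_pBL_iff])]
    exact heb

lemma hyp4 : ∀ σ ∈ K3 k, ee0 k ⊆ σ → pB2 k ∉ σ → insert (pB2 k) σ ∈ K3 k := by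
  intro σ hσ hts _
  obtain ⟨hσ2, hh1f⟩ := Finset.mem_filter.1 hσ
  obtain ⟨hσ1, heb⟩ := Finset.mem_filter.1 hσ2
  obtain ⟨hσ0, hea⟩ := Finset.mem_filter.1 hσ1
  have hA0 : pA0 k ∈ σ := hts (by simp [ee0])
  have hB0 : pB0 k ∈ σ := hts (by simp [ee0])
  have hind := (mem_indepFaces _ σ).1 hσ0
  refine Finset.mem_filter.2 ⟨Finset.mem_filter.2 ⟨Finset.mem_filter.2
    ⟨insert_indep _ hσ0 ?_, ?_⟩, ?_⟩, ?_⟩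
  · intro y hy hadj
    rcases nbhdMH_pB2 k y hadj with rfl | rfl
    · exact hind _ hy _ hB0 (adjMH_pB1_pB0 k)
    · exact hh1f (by
        intro z hz
        simp only [hh1, Finset.mem_insert, Finset.mem_singleton] at hz
        rcases hz with rfl | rfl | rfl
        · exact hA0
        · exact hB0
        · exact hy)
  · rw [Finset.subset_insert_iff_of_notMem (by simp [ea, eq_pA2_iff, eq_pAL_iff])]
    exact hea
  · intro hc
    have hBL : pBL k ∈ σ := by
      have := hc (show pBL k ∈ eb k by simp [eb])
      rcases Finset.mem_insert.1 this with h | h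
      · exact absurd h (by simp [eq_pB2_iff])
      · exact h
    exact hind _ hBL _ hA0 (adjMH_pBL_pA0 k)
  · rw [Finset.subset_insert_iff_of_notMem (by simp [hh1, eq_pA0_iff, eq_pB0_iff, eq_pB3_iff])]
    exact hh1f

lemma hyp7 : ∀ σ ∈ K7 k, tb k ⊆ σ → pA0 k ∉ σ → insert (pA0 k) σ ∈ K7 k := by
  intro σ hσ hts _
  have hB1 : pB1 k ∈ σ := hts (by simp [tb])
  have hB2 : pB2 k ∈ σ := hts (by simp [tb])
  have hind := (mem_indepFaces _ σ).1 hσ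
  refine insert_indep _ hσ ?_
  intro y hy hadj
  rcases nbhdGed_pA0 k y hadj with rfl | rfl | rfl
  · exact hind _ hy _ hB1 (adjGed_pA1_pB1 k)
  · exact hind _ hy _ hB2 (adjGed_pBL_pB2 k)
  · exact hind _ hy _ hB1 (adjGed_pB0_pB1 k)

lemma hyp6 : ∀ σ ∈ K6 k, ta k ⊆ σ → pB0 k ∉ σ → insert (pB0 k) σ ∈ K6 k := by
  intro σ hσ hts _
  obtain ⟨hσ0, htb⟩ := Finset.mem_filter.1 hσ
  have hA1 : pA1 k ∈ σ := hts (by simp [ta])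
  have hA2 : pA2 k ∈ σ := hts (by simp [ta])
  have hind := (mem_indepFaces _ σ).1 hσ0
  refine Finset.mem_filter.2 ⟨insert_indep _ hσ0 ?_, ?_⟩
  · intro y hy hadj
    rcases nbhdGed_pB0 k y hadj with rfl | rfl | rfl
    · exact hind _ hy _ hA1 (adjGed_pB1_pA1 k)
    · exact hind _ hy _ hA2 (adjGed_pAL_pA2 k)
    · exact hind _ hy _ hA1 (adjGed_pA0_pA1 k)
  · rw [Finset.subset_insert_iff_of_notMem (by simp [tb, eq_pB1_iff, eq_pB2_iff])]
    exact htb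

lemma hyp8 : ∀ σ ∈ K7 k, sA0 k ⊆ σ → pB1 k ∉ σ → insert (pB1 k) σ ∈ K7 k := by
  intro σ hσ hts _
  have hA0 : pA0 k ∈ σ := hts (by simp [sA0])
  have hind := (mem_indepFaces _ σ).1 hσ
  refine insert_indep _ hσ ?_
  intro y hy hadj
  rcases nbhdGed_pB1 k y hadj with rfl | rfl
  · exact hind _ hy _ hA0 (adjGed_pB0_pA0 k)
  · exact hind _ hy _ hA0 (adjGed_pA1_pA0 k)

lemma hyp9 : ∀ σ ∈ K8 k, sB0 k ⊆ σ → pA1 k ∉ σ → insert (pA1 k) σ ∈ K8 k := by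
  intro σ hσ hts _
  obtain ⟨hσ0, hsA0⟩ := Finset.mem_filter.1 hσ
  have hB0 : pB0 k ∈ σ := hts (by simp [sB0])
  have hind := (mem_indepFaces _ σ).1 hσ0
  refine Finset.mem_filter.2 ⟨insert_indep _ hσ0 ?_, ?_⟩
  · intro y hy hadj
    rcases nbhdGed_pA1 k y hadj with rfl | rfl
    · exact hsA0 (by simpa [sA0, Finset.singleton_subset_iff] using hy)
    · exact hind _ hy _ hB0 (adjGed_pB1_pB0 k)
  · rw [Finset.subset_insert_iff_of_notMem (by simp [sA0, eq_pA0_iff])]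
    exact hsA0

end MHfolds
section MHmid
variable (k : ℕ)

lemma pair_sub {W : Type} [DecidableEq W] {x y : W} {σ : Finset W}
    (hx : x ∈ σ) (hy : y ∈ σ) : ({x, y} : Finset W) ⊆ σ := by
  rw [Finset.insert_subset_iff, Finset.singleton_subset_iff]
  exact ⟨hx, hy⟩

lemma K4_eq_K5 : K4 k = K5 k := by
  ext σ
  simp only [K4, K3, K2, K1, K5, K6, Finset.mem_filter]
  constructor
  · rintro ⟨⟨⟨⟨hind, hea⟩, heb⟩, hh1f⟩, he0⟩
    have hindM := (mem_indepFaces _ σ).1 (show σ ∈ K0 k from hind)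
    refine ⟨⟨?_, ?_⟩, ?_⟩
    · rw [K7, mem_indepFaces]
      intro a ha b hb hadj
      rcases Ged_adj_cases k a b hadj with
        h | ⟨h1, h2⟩ | ⟨h1, h2⟩ | ⟨h1, h2⟩ | ⟨h1, h2⟩ | ⟨h1, h2⟩ | ⟨h1, h2⟩
      · exact hindM a ha b hb h
      · exact he0 (by rw [ee0]; exact pair_sub (h1 ▸ ha) (h2 ▸ hb))
      · exact he0 (by rw [ee0]; exact pair_sub (h2 ▸ hb) (h1 ▸ ha))
      · exact hea (by rw [ea]; exact pair_sub (h1 ▸ ha) (h2 ▸ hb))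
      · exact hea (by rw [ea]; exact pair_sub (h2 ▸ hb) (h1 ▸ ha))
      · exact heb (by rw [eb]; exact pair_sub (h1 ▸ ha) (h2 ▸ hb))
      · exact heb (by rw [eb]; exact pair_sub (h2 ▸ hb) (h1 ▸ ha))
    · intro hc
      exact hindM _ (hc (by simp [tb])) _ (hc (by simp [tb])) (adjMH_pB1_pB2 k)
    · intro hc
      exact hindM _ (hc (by simp [ta])) _ (hc (by simp [ta])) (adjMH_pA1_pA2 k)
  · rintro ⟨⟨hindG, htb⟩, hta⟩
    have hindG' := (mem_indepFaces _ σ).1 (show σ ∈ K7 k from hindG)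
    have hindM : σ ∈ K0 k := by
      rw [K0, mem_indepFaces]
      intro a ha b hb hadj
      rcases MH_adj_cases k a b hadj with
        h | ⟨h1, h2⟩ | ⟨h1, h2⟩ | ⟨h1, h2⟩ | ⟨h1, h2⟩
      · exact hindG' a ha b hb h
      · exact hta (by rw [ta]; exact pair_sub (h1 ▸ ha) (h2 ▸ hb))
      · exact hta (by rw [ta]; exact pair_sub (h2 ▸ hb) (h1 ▸ ha))
      · exact htb (by rw [tb]; exact pair_sub (h1 ▸ ha) (h2 ▸ hb))
      · exact htb (by rw [tb]; exact pair_sub (h2 ▸ hb) (h1 ▸ ha))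
    have hA0B0 : ¬ (pA0 k ∈ σ ∧ pB0 k ∈ σ) := by
      rintro ⟨h1, h2⟩
      exact hindG' _ h1 _ h2 (adjGed_pA0_pB0 k)
    refine ⟨⟨⟨⟨hindM, ?_⟩, ?_⟩, ?_⟩, ?_⟩
    · intro hc
      exact hindG' _ (hc (by simp [ea])) _ (hc (by simp [ea])) (adjGed_pA2_pAL k)
    · intro hc
      exact hindG' _ (hc (by simp [eb])) _ (hc (by simp [eb])) (adjGed_pB2_pBL k)
    · intro hc
      exact hA0B0 ⟨hc (by simp [hh1]), hc (by simp [hh1])⟩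
    · intro hc
      exact hA0B0 ⟨hc (by simp [ee0]), hc (by simp [ee0])⟩

end MHmid
section MHiso
variable (k : ℕ)

abbrev Wt := Fin 2 × Fin (2 * (k + 2))

def dropv (v : Vt k) : Wt k := (v.1, ⟨(v.2 : ℕ) - 2, by have := v.2.isLt; omega⟩)
def liftv (w : Wt k) : Vt k := (w.1, ⟨(w.2 : ℕ) + 2, by have := w.2.isLt; omega⟩)

@[simp] lemma dropv_r (v : Vt k) : ((dropv k v).1 : ℕ) = (v.1 : ℕ) := rfl
@[simp] lemma dropv_c (v : Vt k) : ((dropv k v).2 : ℕ) = (v.2 : ℕ) - 2 := rfl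
@[simp] lemma liftv_r (w : Wt k) : ((liftv k w).1 : ℕ) = (w.1 : ℕ) := rfl
@[simp] lemma liftv_c (w : Wt k) : ((liftv k w).2 : ℕ) = (w.2 : ℕ) + 2 := rfl

lemma liftv_dropv (v : Vt k) (h : 2 ≤ (v.2 : ℕ)) : liftv k (dropv k v) = v := by
  have := v.2.isLt
  exact Prod.ext rfl (Fin.ext (by simp; omega))

lemma dropv_liftv (w : Wt k) : dropv k (liftv k w) = w := by
  exact Prod.ext rfl (Fin.ext (by simp))

def fmap : Vt k → Wt k ⊕ Bool := fun v =>
  if (v.2 : ℕ) = 1 then Sum.inr (decide ((v.1 : ℕ) = 1)) else Sum.inl (dropv k v)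

lemma mod_succ_iff (a b m : ℕ) (ha : a < m) (hb : b < m) :
    b = (a + 1) % m ↔ (a + 1 = b ∨ (a = m - 1 ∧ b = 0)) := by
  rcases Nat.lt_or_ge (a + 1) m with h | h
  · rw [Nat.mod_eq_of_lt h]; omega
  · have hm : a + 1 = m := by omega
    rw [hm, Nat.mod_self]; omega

lemma CH_adj_iff (u v : Wt k) :
    (gridCH (k + 2)).Adj u v ↔
      ¬((u.1 : ℕ) = (v.1 : ℕ) ∧ (u.2 : ℕ) = (v.2 : ℕ)) ∧
      ((((u.1:ℕ) = (v.1:ℕ)) ∧ ((u.2:ℕ)+1 = (v.2:ℕ) ∨ ((u.2:ℕ) = 2*(k+2)-1 ∧ (v.2:ℕ) = 0))) ∨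
       ((u.1:ℕ)+1 = (v.1:ℕ) ∧ (u.2:ℕ) = (v.2:ℕ) ∧ (u.2:ℕ) % 2 = 1) ∨
       (((v.1:ℕ) = (u.1:ℕ)) ∧ ((v.2:ℕ)+1 = (u.2:ℕ) ∨ ((v.2:ℕ) = 2*(k+2)-1 ∧ (u.2:ℕ) = 0))) ∨
       ((v.1:ℕ)+1 = (u.1:ℕ) ∧ (v.2:ℕ) = (u.2:ℕ) ∧ (v.2:ℕ) % 2 = 1)) := by
  rw [gridCH, SimpleGraph.fromRel_adj]
  have hu2 := u.2.isLt
  have hv2 := v.2.isLt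
  constructor
  · rintro ⟨hne, h⟩
    refine ⟨fun hh => hne (Prod.ext (Fin.ext hh.1) (Fin.ext hh.2)), ?_⟩
    rcases h with (h|h)|(h|h)
    · exact Or.inl ⟨congrArg Fin.val h.1,
        (mod_succ_iff (u.2:ℕ) (v.2:ℕ) _ hu2 hv2).1 h.2⟩
    · exact Or.inr (Or.inl ⟨h.1, congrArg Fin.val h.2.1, Nat.not_even_iff.1 h.2.2⟩)
    · exact Or.inr (Or.inr (Or.inl ⟨congrArg Fin.val h.1,
        (mod_succ_iff (v.2:ℕ) (u.2:ℕ) _ hv2 hu2).1 h.2⟩))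
    · exact Or.inr (Or.inr (Or.inr ⟨h.1, congrArg Fin.val h.2.1, Nat.not_even_iff.1 h.2.2⟩))
  · rintro ⟨hne, h⟩
    refine ⟨fun hh => hne ⟨congrArg (fun x => (x.1 : ℕ)) hh,
      congrArg (fun x => (x.2 : ℕ)) hh⟩, ?_⟩
    rcases h with h|h|h|h
    · exact Or.inl (Or.inl ⟨Fin.ext h.1, (mod_succ_iff (u.2:ℕ) (v.2:ℕ) _ hu2 hv2).2 h.2⟩)
    · exact Or.inl (Or.inr ⟨h.1, Fin.ext h.2.1, Nat.not_even_iff.2 h.2.2⟩)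
    · exact Or.inr (Or.inl ⟨Fin.ext h.1, (mod_succ_iff (v.2:ℕ) (u.2:ℕ) _ hv2 hu2).2 h.2⟩)
    · exact Or.inr (Or.inr ⟨h.1, Fin.ext h.2.1, Nat.not_even_iff.2 h.2.2⟩)

lemma adj_liftv_iff (w1 w2 : Wt k) :
    (Ged k).Adj (liftv k w1) (liftv k w2) ↔ (gridCH (k + 2)).Adj w1 w2 := by
  rw [Ged_adj_iff, CH_adj_iff]
  simp only [liftv_r, liftv_c]
  have h1 := w1.2.isLt
  have h2 := w2.2.isLt
  constructor
  · rintro ⟨hne, h⟩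
    refine ⟨fun hh => hne (by omega), ?_⟩
    rcases h with (h|h|h|h)|(h|h|h|h) <;> omega
  · rintro ⟨hne, h⟩
    refine ⟨fun hh => hne (by omega), ?_⟩
    rcases h with h|h|h|h
    · rcases h.2 with h2' | h2'
      · exact Or.inl (Or.inr (Or.inl (by omega)))
      · exact Or.inr (Or.inr (Or.inr (Or.inr (by omega))))
    · exact Or.inl (Or.inl (by omega))
    · rcases h.2 with h2' | h2'
      · exact Or.inr (Or.inr (Or.inl (by omega)))
      · exact Or.inl (Or.inr (Or.inr (Or.inr (by omega))))
    · exact Or.inr (Or.inl (by omega))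

lemma col0cases (v : Vt k) (h : (v.2 : ℕ) = 0) : v = pA0 k ∨ v = pB0 k := by
  have := v.1.isLt
  rw [eq_pA0_iff, eq_pB0_iff]
  omega

lemma col1cases (v : Vt k) (h : (v.2 : ℕ) = 1) : v = pA1 k ∨ v = pB1 k := by
  have := v.1.isLt
  rw [eq_pA1_iff, eq_pB1_iff]
  omega

lemma mem_K9_iff (σ : Finset (Vt k)) :
    σ ∈ K9 k ↔ (∀ a ∈ σ, ∀ b ∈ σ, ¬ (Ged k).Adj a b) ∧ pA0 k ∉ σ ∧ pB0 k ∉ σ := by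
  simp only [K9, K8, K7, Finset.mem_filter, mem_indepFaces, sA0, sB0,
    Finset.singleton_subset_iff]
  tauto

lemma K9_no_col0 {σ : Finset (Vt k)} (hσ : σ ∈ K9 k) {v : Vt k} (hv : v ∈ σ) :
    (v.2 : ℕ) ≠ 0 := by
  intro h0
  obtain ⟨-, hA, hB⟩ := (mem_K9_iff k σ).1 hσ
  rcases col0cases k v h0 with rfl | rfl
  · exact hA hv
  · exact hB hv

end MHiso
section MHiso2
variable (k : ℕ)

def sigC (σ : Finset (Vt k)) : Finset (Wt k) :=
  (σ.filter (fun v => 2 ≤ (v.2 : ℕ))).image (dropv k)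

def tau2 (σ : Finset (Vt k)) : Finset Bool :=
  (σ.filter (fun v => (v.2 : ℕ) = 1)).image (fun v => decide ((v.1 : ℕ) = 1))

lemma imageface {σ : Finset (Vt k)} (hσ : σ ∈ K9 k) :
    σ.image (fmap k) = (sigC k σ).disjSum (tau2 k σ) := by
  ext z
  cases z with
  | inl w =>
    simp only [Finset.mem_image, Finset.inl_mem_disjSum, sigC, Finset.mem_filter]
    constructor
    · rintro ⟨v, hv, hfv⟩
      have h0 := K9_no_col0 k hσ hv
      by_cases h1 : (v.2 : ℕ) = 1
      · rw [fmap, if_pos h1] at hfv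
        exact absurd hfv (by simp)
      · rw [fmap, if_neg h1] at hfv
        exact ⟨v, ⟨hv, by omega⟩, Sum.inl.inj hfv⟩
    · rintro ⟨v, ⟨hv, h2⟩, rfl⟩
      exact ⟨v, hv, by rw [fmap, if_neg (by omega)]⟩
  | inr b =>
    simp only [Finset.mem_image, Finset.inr_mem_disjSum, tau2, Finset.mem_filter]
    constructor
    · rintro ⟨v, hv, hfv⟩
      by_cases h1 : (v.2 : ℕ) = 1
      · rw [fmap, if_pos h1] at hfv
        exact ⟨v, ⟨hv, h1⟩, Sum.inr.inj hfv⟩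
      · rw [fmap, if_neg h1] at hfv
        exact absurd hfv (by simp)
    · rintro ⟨v, ⟨hv, h1⟩, rfl⟩
      exact ⟨v, hv, by rw [fmap, if_pos h1]⟩

lemma sigC_indep {σ : Finset (Vt k)} (hσ : σ ∈ K9 k) :
    sigC k σ ∈ indepFaces (gridCH (k + 2)) := by
  obtain ⟨hind, -, -⟩ := (mem_K9_iff k σ).1 hσ
  rw [mem_indepFaces]
  intro a ha b hb hadj
  obtain ⟨x, hx, rfl⟩ := Finset.mem_image.1 ha
  obtain ⟨y, hy, rfl⟩ := Finset.mem_image.1 hb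
  obtain ⟨hxσ, hx2⟩ := Finset.mem_filter.1 hx
  obtain ⟨hyσ, hy2⟩ := Finset.mem_filter.1 hy
  have h := (adj_liftv_iff k _ _).2 hadj
  rw [liftv_dropv k x hx2, liftv_dropv k y hy2] at h
  exact hind x hxσ y hyσ h

lemma tau2_mem {σ : Finset (Vt k)} (hσ : σ ∈ K9 k) : tau2 k σ ∈ sphere0.faces := by
  obtain ⟨hind, -, -⟩ := (mem_K9_iff k σ).1 hσ
  have hmem : ∀ v ∈ σ, (v.2 : ℕ) = 1 → v = pA1 k ∨ v = pB1 k := fun v _ h => col1cases k v h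
  show tau2 k σ ∈ ({∅, {false}, {true}} : Finset (Finset Bool))
  simp only [Finset.mem_insert, Finset.mem_singleton]
  by_cases hA1 : pA1 k ∈ σ
  · by_cases hB1 : pB1 k ∈ σ
    · exact absurd (adjGed_pA1_pB1 k) (hind _ hA1 _ hB1)
    · refine Or.inr (Or.inl ?_)
      ext b
      simp only [tau2, Finset.mem_image, Finset.mem_filter, Finset.mem_singleton]
      constructor
      · rintro ⟨v, ⟨hv, h1⟩, rfl⟩
        rcases col1cases k v h1 with rfl | rfl
        · simp
        · exact absurd hv hB1
      · rintro rfl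
        exact ⟨pA1 k, ⟨hA1, rfl⟩, by simp⟩
  · by_cases hB1 : pB1 k ∈ σ
    · refine Or.inr (Or.inr ?_)
      ext b
      simp only [tau2, Finset.mem_image, Finset.mem_filter, Finset.mem_singleton]
      constructor
      · rintro ⟨v, ⟨hv, h1⟩, rfl⟩
        rcases col1cases k v h1 with rfl | rfl
        · exact absurd hv hA1
        · simp
      · rintro rfl
        exact ⟨pB1 k, ⟨hB1, rfl⟩, by simp⟩
    · refine Or.inl ?_
      ext b
      simp only [tau2, Finset.mem_image, Finset.mem_filter, Finset.notMem_empty,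
        iff_false]
      rintro ⟨v, ⟨hv, h1⟩, -⟩
      rcases col1cases k v h1 with rfl | rfl
      · exact hA1 hv
      · exact hB1 hv

def bvert (b : Bool) : Vt k := cond b (pB1 k) (pA1 k)

@[simp] lemma bvert_c (b : Bool) : ((bvert k b).2 : ℕ) = 1 := by cases b <;> rfl

lemma fmap_liftv (w : Wt k) : fmap k (liftv k w) = Sum.inl w := by
  rw [fmap, if_neg (by simp), dropv_liftv]

lemma fmap_bvert (b : Bool) : fmap k (bvert k b) = Sum.inr b := by
  cases b <;> rfl

lemma preimage_mem {sC : Finset (Wt k)} {t2 : Finset Bool}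
    (hsC : sC ∈ indepFaces (gridCH (k + 2))) (ht2 : t2 ∈ sphere0.faces) :
    sC.image (liftv k) ∪ t2.image (bvert k) ∈ K9 k := by
  have hindCH := (mem_indepFaces _ sC).1 hsC
  have ht2' : t2 = ∅ ∨ t2 = {false} ∨ t2 = {true} := by
    have h' : t2 ∈ ({∅, {false}, {true}} : Finset (Finset Bool)) := ht2
    simpa [Finset.mem_insert, Finset.mem_singleton] using h'
  have ht2sing : ∀ b1 ∈ t2, ∀ b2 ∈ t2, b1 = b2 := by
    rcases ht2' with rfl | rfl | rfl <;> simp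
  have hliftnotlow : ∀ w : Wt k, ∀ y : Vt k, (y.2 : ℕ) ≤ 1 → liftv k w ≠ y := by
    intro w y hy he
    have : ((liftv k w).2 : ℕ) = (y.2 : ℕ) := congrArg (fun x => (x.2 : ℕ)) he
    simp at this; omega
  rw [mem_K9_iff]
  refine ⟨?_, ?_, ?_⟩
  · intro a ha b hb hadj
    rcases Finset.mem_union.1 ha with ha' | ha' <;>
      rcases Finset.mem_union.1 hb with hb' | hb'
    · obtain ⟨w1, hw1, rfl⟩ := Finset.mem_image.1 ha'
      obtain ⟨w2, hw2, rfl⟩ := Finset.mem_image.1 hb'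
      exact hindCH w1 hw1 w2 hw2 ((adj_liftv_iff k w1 w2).1 hadj)
    · obtain ⟨w1, hw1, rfl⟩ := Finset.mem_image.1 ha'
      obtain ⟨b2, hb2, rfl⟩ := Finset.mem_image.1 hb'
      cases b2
      · rcases nbhdGed_pA1 k _ hadj.symm with h | h
        · exact hliftnotlow w1 (pA0 k) (by simp) h
        · exact hliftnotlow w1 (pB1 k) (by simp) h
      · rcases nbhdGed_pB1 k _ hadj.symm with h | h
        · exact hliftnotlow w1 (pB0 k) (by simp) h
        · exact hliftnotlow w1 (pA1 k) (by simp) h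
    · obtain ⟨b1, hb1, rfl⟩ := Finset.mem_image.1 ha'
      obtain ⟨w2, hw2, rfl⟩ := Finset.mem_image.1 hb'
      cases b1
      · rcases nbhdGed_pA1 k _ hadj with h | h
        · exact hliftnotlow w2 (pA0 k) (by simp) h
        · exact hliftnotlow w2 (pB1 k) (by simp) h
      · rcases nbhdGed_pB1 k _ hadj with h | h
        · exact hliftnotlow w2 (pB0 k) (by simp) h
        · exact hliftnotlow w2 (pA1 k) (by simp) h
    · obtain ⟨b1, hb1, rfl⟩ := Finset.mem_image.1 ha'
      obtain ⟨b2, hb2, rfl⟩ := Finset.mem_image.1 hb'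
      rw [ht2sing b1 hb1 b2 hb2] at hadj
      exact (Ged k).irrefl hadj
  · intro hc
    rcases Finset.mem_union.1 hc with h | h
    · obtain ⟨w, -, hw⟩ := Finset.mem_image.1 h
      exact hliftnotlow w (pA0 k) (by simp) hw
    · obtain ⟨b, -, hb⟩ := Finset.mem_image.1 h
      have := congrArg (fun x => (x.2 : ℕ)) hb
      simp at this
  · intro hc
    rcases Finset.mem_union.1 hc with h | h
    · obtain ⟨w, -, hw⟩ := Finset.mem_image.1 h
      exact hliftnotlow w (pB0 k) (by simp) hw
    · obtain ⟨b, -, hb⟩ := Finset.mem_image.1 h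
      have := congrArg (fun x => (x.2 : ℕ)) hb
      simp at this

lemma preimage_image {sC : Finset (Wt k)} {t2 : Finset Bool} :
    (sC.image (liftv k) ∪ t2.image (bvert k)).image (fmap k) = sC.disjSum t2 := by
  rw [Finset.image_union, Finset.image_image, Finset.image_image]
  have e1 : fmap k ∘ liftv k = Sum.inl := funext fun w => fmap_liftv k w
  have e2 : fmap k ∘ bvert k = Sum.inr := funext fun b => fmap_bvert k b
  rw [e1, e2]
  ext z
  cases z with
  | inl w => simp [Finset.inl_mem_disjSum]
  | inr b => simp [Finset.inr_mem_disjSum]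

lemma facesEq :
    ((indepCplx (gridCH (k + 2))).susp).faces = (K9 k).image (Finset.image (fmap k)) := by
  ext τ
  constructor
  · intro hτ
    obtain ⟨p, hp, rfl⟩ := Finset.mem_image.1 hτ
    obtain ⟨hp1, hp2⟩ := Finset.mem_product.1 hp
    exact Finset.mem_image.2 ⟨p.1.image (liftv k) ∪ p.2.image (bvert k),
      preimage_mem k hp1 hp2, preimage_image k⟩
  · intro hτ
    obtain ⟨σ, hσ, rfl⟩ := Finset.mem_image.1 hτ
    exact Finset.mem_image.2 ⟨(sigC k σ, tau2 k σ),
      Finset.mem_product.2 ⟨sigC_indep k hσ, tau2_mem k hσ⟩, (imageface k hσ).symm⟩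

lemma fmap_injOn : Set.InjOn (fmap k) {v | ({v} : Finset (Vt k)) ∈ K9 k} := by
  intro v hv w hw h
  have hv' : (v.2 : ℕ) ≠ 0 := K9_no_col0 k hv (Finset.mem_singleton_self v)
  have hw' : (w.2 : ℕ) ≠ 0 := K9_no_col0 k hw (Finset.mem_singleton_self w)
  have hv1 := v.1.isLt
  have hw1 := w.1.isLt
  by_cases cv : (v.2 : ℕ) = 1 <;> by_cases cw : (w.2 : ℕ) = 1
  · rw [fmap, if_pos cv, fmap, if_pos cw] at h
    have hd : ((v.1 : ℕ) = 1) ↔ ((w.1 : ℕ) = 1) := by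
      simpa [decide_eq_decide] using Sum.inr.inj h
    have hv0 : (v.1 : ℕ) = (w.1 : ℕ) := by
      by_cases h1 : (v.1 : ℕ) = 1
      · have := hd.1 h1; omega
      · have h2 : ¬ (w.1 : ℕ) = 1 := fun hh => h1 (hd.2 hh)
        omega
    exact Prod.ext (Fin.ext hv0) (Fin.ext (by omega))
  · rw [fmap, if_pos cv, fmap, if_neg cw] at h
    exact absurd h (by simp)
  · rw [fmap, if_neg cv, fmap, if_pos cw] at h
    exact absurd h (by simp)
  · rw [fmap, if_neg cv, fmap, if_neg cw] at h
    have := Sum.inl.inj h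
    have h1 : (v.1 : ℕ) = (w.1 : ℕ) := congrArg (fun x => (x.1 : ℕ)) this
    have h2 : (v.2 : ℕ) - 2 = (w.2 : ℕ) - 2 := congrArg (fun x => (x.2 : ℕ)) this
    exact Prod.ext (Fin.ext h1) (Fin.ext (by omega))

end MHiso2
section MHassemble
variable (k : ℕ)

lemma K0_empty : ∅ ∈ K0 k := empty_indepFaces _
lemma K0_dc : ∀ σ ∈ K0 k, ∀ τ ⊆ σ, τ ∈ K0 k := dc_indepFaces _
lemma K7_empty : ∅ ∈ K7 k := empty_indepFaces _
lemma K7_dc : ∀ σ ∈ K7 k, ∀ τ ⊆ σ, τ ∈ K7 k := dc_indepFaces _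

lemma ea_ne : (ea k).Nonempty := ⟨pA2 k, by simp [ea]⟩
lemma eb_ne : (eb k).Nonempty := ⟨pB2 k, by simp [eb]⟩
lemma hh1_ne : (hh1 k).Nonempty := ⟨pA0 k, by simp [hh1]⟩
lemma ee0_ne : (ee0 k).Nonempty := ⟨pA0 k, by simp [ee0]⟩
lemma ta_ne : (ta k).Nonempty := ⟨pA1 k, by simp [ta]⟩
lemma tb_ne : (tb k).Nonempty := ⟨pB1 k, by simp [tb]⟩
lemma sA0_ne : (sA0 k).Nonempty := ⟨pA0 k, by simp [sA0]⟩
lemma sB0_ne : (sB0 k).Nonempty := ⟨pB0 k, by simp [sB0]⟩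

lemma K1_empty : ∅ ∈ K1 k := empty_filt (K0_empty k) (ea_ne k)
lemma K1_dc : ∀ σ ∈ K1 k, ∀ τ ⊆ σ, τ ∈ K1 k := dc_filt (K0_dc k) _
lemma K2_empty : ∅ ∈ K2 k := empty_filt (K1_empty k) (eb_ne k)
lemma K2_dc : ∀ σ ∈ K2 k, ∀ τ ⊆ σ, τ ∈ K2 k := dc_filt (K1_dc k) _
lemma K3_empty : ∅ ∈ K3 k := empty_filt (K2_empty k) (hh1_ne k)
lemma K3_dc : ∀ σ ∈ K3 k, ∀ τ ⊆ σ, τ ∈ K3 k := dc_filt (K2_dc k) _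
lemma K4_empty : ∅ ∈ K4 k := empty_filt (K3_empty k) (ee0_ne k)
lemma K4_dc : ∀ σ ∈ K4 k, ∀ τ ⊆ σ, τ ∈ K4 k := dc_filt (K3_dc k) _
lemma K6_empty : ∅ ∈ K6 k := empty_filt (K7_empty k) (tb_ne k)
lemma K6_dc : ∀ σ ∈ K6 k, ∀ τ ⊆ σ, τ ∈ K6 k := dc_filt (K7_dc k) _
lemma K5_empty : ∅ ∈ K5 k := empty_filt (K6_empty k) (ta_ne k)
lemma K5_dc : ∀ σ ∈ K5 k, ∀ τ ⊆ σ, τ ∈ K5 k := dc_filt (K6_dc k) _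
lemma K8_empty : ∅ ∈ K8 k := empty_filt (K7_empty k) (sA0_ne k)
lemma K8_dc : ∀ σ ∈ K8 k, ∀ τ ⊆ σ, τ ∈ K8 k := dc_filt (K7_dc k) _
lemma K9_empty : ∅ ∈ K9 k := empty_filt (K8_empty k) (sB0_ne k)
lemma K9_dc : ∀ σ ∈ K9 k, ∀ τ ⊆ σ, τ ∈ K9 k := dc_filt (K8_dc k) _

lemma mainlemma :
    SimpleHtpyEq (indepCplx (gridMH (k + 2 + 1))) ((indepCplx (gridCH (k + 2))).susp) := by
  have E01 : SimpleHtpyEq (packCplx (K0 k) (K0_empty k) (K0_dc k))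
      (packCplx (K1 k) (K1_empty k) (K1_dc k)) :=
    fold_eqv (ea k) (pA0 k) (by simp [ea, eq_pA2_iff, eq_pAL_iff]) (ea_ne k)
      (K0 k) (K0_empty k) (K0_dc k) (hyp1 k) (K1 k) rfl (K1_empty k) (K1_dc k)
  have E12 : SimpleHtpyEq (packCplx (K1 k) (K1_empty k) (K1_dc k))
      (packCplx (K2 k) (K2_empty k) (K2_dc k)) :=
    fold_eqv (eb k) (pB0 k) (by simp [eb, eq_pB2_iff, eq_pBL_iff]) (eb_ne k)
      (K1 k) (K1_empty k) (K1_dc k) (hyp2 k) (K2 k) rfl (K2_empty k) (K2_dc k)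
  have E23 : SimpleHtpyEq (packCplx (K2 k) (K2_empty k) (K2_dc k))
      (packCplx (K3 k) (K3_empty k) (K3_dc k)) :=
    fold_eqv (hh1 k) (pA2 k) (by simp [hh1, eq_pA0_iff, eq_pB0_iff, eq_pB3_iff]) (hh1_ne k)
      (K2 k) (K2_empty k) (K2_dc k) (hyp3 k) (K3 k) rfl (K3_empty k) (K3_dc k)
  have E34 : SimpleHtpyEq (packCplx (K3 k) (K3_empty k) (K3_dc k))
      (packCplx (K4 k) (K4_empty k) (K4_dc k)) :=
    fold_eqv (ee0 k) (pB2 k) (by simp [ee0, eq_pA0_iff, eq_pB0_iff]) (ee0_ne k)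
      (K3 k) (K3_empty k) (K3_dc k) (hyp4 k) (K4 k) rfl (K4_empty k) (K4_dc k)
  have E45 : packCplx (K4 k) (K4_empty k) (K4_dc k)
      = packCplx (K5 k) (K5_empty k) (K5_dc k) :=
    packCplx_congr (K4_eq_K5 k) _ _ _ _
  have E65 : SimpleHtpyEq (packCplx (K6 k) (K6_empty k) (K6_dc k))
      (packCplx (K5 k) (K5_empty k) (K5_dc k)) :=
    fold_eqv (ta k) (pB0 k) (by simp [ta, eq_pA1_iff, eq_pA2_iff]) (ta_ne k)
      (K6 k) (K6_empty k) (K6_dc k) (hyp6 k) (K5 k) rfl (K5_empty k) (K5_dc k)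
  have E76 : SimpleHtpyEq (packCplx (K7 k) (K7_empty k) (K7_dc k))
      (packCplx (K6 k) (K6_empty k) (K6_dc k)) :=
    fold_eqv (tb k) (pA0 k) (by simp [tb, eq_pB1_iff, eq_pB2_iff]) (tb_ne k)
      (K7 k) (K7_empty k) (K7_dc k) (hyp7 k) (K6 k) rfl (K6_empty k) (K6_dc k)
  have E78 : SimpleHtpyEq (packCplx (K7 k) (K7_empty k) (K7_dc k))
      (packCplx (K8 k) (K8_empty k) (K8_dc k)) :=
    fold_eqv (sA0 k) (pB1 k) (by simp [sA0, eq_pA0_iff]) (sA0_ne k)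
      (K7 k) (K7_empty k) (K7_dc k) (hyp8 k) (K8 k) rfl (K8_empty k) (K8_dc k)
  have E89 : SimpleHtpyEq (packCplx (K8 k) (K8_empty k) (K8_dc k))
      (packCplx (K9 k) (K9_empty k) (K9_dc k)) :=
    fold_eqv (sB0 k) (pA1 k) (by simp [sB0, eq_pB0_iff]) (sB0_ne k)
      (K8 k) (K8_empty k) (K8_dc k) (hyp9 k) (K9 k) rfl (K9_empty k) (K9_dc k)
  have EIso : SimpleHtpyEq (packCplx (K9 k) (K9_empty k) (K9_dc k))
      ((indepCplx (gridCH (k + 2))).susp) :=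
    Relation.EqvGen.rel _ _ (Or.inl ⟨fmap k, fmap_injOn k, facesEq k⟩)
  have Estart : indepCplx (gridMH (k + 2 + 1)) = packCplx (K0 k) (K0_empty k) (K0_dc k) := rfl
  rw [Estart]
  refine Relation.EqvGen.trans _ _ _ E01 ?_
  refine Relation.EqvGen.trans _ _ _ E12 ?_
  refine Relation.EqvGen.trans _ _ _ E23 ?_
  refine Relation.EqvGen.trans _ _ _ E34 ?_
  rw [E45]
  refine Relation.EqvGen.trans _ _ _ (Relation.EqvGen.symm _ _ E65) ?_
  refine Relation.EqvGen.trans _ _ _ (Relation.EqvGen.symm _ _ E76) ?_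
  refine Relation.EqvGen.trans _ _ _ E78 ?_
  exact Relation.EqvGen.trans _ _ _ E89 EIso

end MHassemble
/-- `I(M^H_{1,n+1}) ≃ˢ Σ I(C^H_{1,n})` for all `n ≥ 2`. -/
theorem indepCplx_gridMH_succ (n : ℕ) (hn : 2 ≤ n) :
    SimpleHtpyEq (indepCplx (gridMH (n + 1))) ((indepCplx (gridCH n)).susp) := by
  obtain ⟨k, rfl⟩ : ∃ k, n = k + 2 := ⟨n - 2, by omega⟩
  exact mainlemma k
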